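/- With x¹ and φ(c) := 1/(1 + TV^c(x¹,[0,1])) as above (with Σ aₙ = ∞), one has lim_{c→0+} φ(c)·TV^c(x¹,[0,t]) = 0 for every t ∈ [0,1), while lim_{c→0+} φ(c)·TV^c(x¹,[0,1]) = 1. -/

import Mathlib

open Filter

/-- Real-valued truncated variation of `x` with parameter `c` on `[s,t]`. -/
noncomputable def truncVarR (x : ℝ → ℝ) (c s t : ℝ) : ℝ :=
  sSup {v : ℝ | ∃ (n : ℕ) (u : Fin (n + 1) → ℝ), Monotone u ∧ u 0 = s ∧
    u (Fin.last n) = t ∧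
    v = ∑ i : Fin n, max (|x (u i.succ) - x (u i.castSucc)| - c) 0}

private lemma sum_two_mul (g : ℕ → ℝ) (N : ℕ) :
    ∑ i ∈ Finset.range (2*N), g i = ∑ k ∈ Finset.range N, (g (2*k) + g (2*k+1)) := by
  induction N with
  | zero => simp
  | succ N ih =>
    rw [Finset.sum_range_succ, ← ih, show 2*(N+1) = (2*N+1)+1 by ring,
      Finset.sum_range_succ, Finset.sum_range_succ]
    ring

private lemma evar_neg (f : ℝ → ℝ) (S : Set ℝ) :
    eVariationOn (fun s => -(f s)) S = eVariationOn f S := by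
  apply le_antisymm
  · apply iSup_le
    rintro ⟨n, ⟨u, hu, us⟩⟩
    simpa only [edist_neg_neg] using eVariationOn.sum_le (f := f) (n := n) hu us
  · apply iSup_le
    rintro ⟨n, ⟨u, hu, us⟩⟩
    simpa only [edist_neg_neg] using eVariationOn.sum_le (f := fun s => -(f s)) (n := n) hu us

private lemma sum_dist_le' (x : ℝ → ℝ) {S : Set ℝ} (hfin : eVariationOn x S ≠ ⊤)
    {w : ℕ → ℝ} (hw : Monotone w) (hmem : ∀ i, w i ∈ S) (n : ℕ) :
    ∑ i ∈ Finset.range n, dist (x (w (i+1))) (x (w i)) ≤ (eVariationOn x S).toReal := by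
  rw [← ENNReal.ofReal_le_iff_le_toReal hfin]
  calc ENNReal.ofReal (∑ i ∈ Finset.range n, dist (x (w (i+1))) (x (w i)))
      = ∑ i ∈ Finset.range n, ENNReal.ofReal (dist (x (w (i+1))) (x (w i))) :=
        ENNReal.ofReal_sum_of_nonneg (fun i _ => dist_nonneg)
    _ = ∑ i ∈ Finset.range n, edist (x (w (i+1))) (x (w i)) := by
        simp [edist_dist]
    _ ≤ eVariationOn x S := eVariationOn.sum_le (f := x) (n := n) hw hmem

private lemma clip_term_le (x : ℝ → ℝ) {τ A c p q : ℝ}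
    (hb : ∀ s, τ ≤ s → s ≤ 1 → |x s| ≤ A) (hτ1 : τ ≤ 1) (hc : 2*A ≤ c)
    (hqp : q ≤ p) (hp1 : p ≤ 1) :
    max (|x p - x q| - c) 0 ≤ dist (x (min p τ)) (x (min q τ)) := by
  have hA : 0 ≤ A := (abs_nonneg _).trans (hb τ le_rfl hτ1)
  rcases le_or_gt q τ with h | h
  · have h1 : |x p - x (min p τ)| ≤ c := by
      rcases le_or_gt p τ with hp | hp
      · rw [min_eq_left hp]
        simp only [sub_self, abs_zero]
        linarith
      · rw [min_eq_right hp.le]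
        have h2 := hb p hp.le hp1
        have h3 := hb τ le_rfl hτ1
        calc |x p - x τ| ≤ |x p| + |x τ| := abs_sub _ _
          _ ≤ c := by linarith
    rw [min_eq_left h, Real.dist_eq]
    apply max_le _ (abs_nonneg _)
    have h2 : |x p - x q| ≤ |x p - x (min p τ)| + |x (min p τ) - x q| := abs_sub_le _ _ _
    linarith
  · have hpτ : τ ≤ p := h.le.trans hqp
    rw [min_eq_right h.le, min_eq_right hpτ]
    have h2 : |x p - x q| ≤ |x p| + |x q| := abs_sub _ _
    have h3 := hb p hpτ hp1
    have h4 := hb q h.le (hqp.trans hp1)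
    apply max_le _ dist_nonneg
    have := dist_nonneg (x := x τ) (y := x τ)
    linarith

private lemma fin_reindex {n : ℕ} (u : Fin (n+1) → ℝ) (F : ℝ → ℝ → ℝ) :
    ∑ i : Fin n, F (u i.succ) (u i.castSucc)
      = ∑ i ∈ Finset.range n, F (u ⟨min (i+1) n, by omega⟩) (u ⟨min i n, by omega⟩) := by
  rw [← Fin.sum_univ_eq_sum_range (fun i => F (u ⟨min (i+1) n, by omega⟩) (u ⟨min i n, by omega⟩)) n]
  refine Finset.sum_congr rfl fun i _ => ?_
  have h1 : (i.succ : Fin (n+1)) = ⟨min (i.1+1) n, by omega⟩ := by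
    apply Fin.ext; simp only [Fin.val_succ]; omega
  have h2 : (i.castSucc : Fin (n+1)) = ⟨min i.1 n, by omega⟩ := by
    apply Fin.ext; simp only [Fin.coe_castSucc]; omega
  rw [h1, h2]

private lemma elem_le_gen (x : ℝ → ℝ) {c s T v : ℝ} (hc : 0 ≤ c) {S : Set ℝ}
    (hS : Set.Icc s T ⊆ S) (hfin : eVariationOn x S ≠ ⊤)
    (hv : ∃ (n : ℕ) (u : Fin (n + 1) → ℝ), Monotone u ∧ u 0 = s ∧ u (Fin.last n) = T ∧
      v = ∑ i : Fin n, max (|x (u i.succ) - x (u i.castSucc)| - c) 0) :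
    v ≤ (eVariationOn x S).toReal := by
  obtain ⟨n, u, hu, h0, hl, rfl⟩ := hv
  set w : ℕ → ℝ := fun i => u ⟨min i n, by omega⟩ with hw
  have hwmono : Monotone w := fun i j hij => hu (Fin.mk_le_mk.mpr (by omega))
  have hwmem : ∀ i, w i ∈ S := fun i =>
    hS ⟨by rw [← h0]; exact hu (Fin.zero_le _), by rw [← hl]; exact hu (Fin.le_last _)⟩
  calc ∑ i : Fin n, max (|x (u i.succ) - x (u i.castSucc)| - c) 0
      = ∑ i ∈ Finset.range n, max (|x (w (i+1)) - x (w i)| - c) 0 := by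
        rw [fin_reindex u (fun p q => max (|x p - x q| - c) 0)]
    _ ≤ ∑ i ∈ Finset.range n, dist (x (w (i+1))) (x (w i)) := by
        refine Finset.sum_le_sum fun i _ => ?_
        refine max_le ?_ dist_nonneg
        rw [Real.dist_eq]; linarith
    _ ≤ (eVariationOn x S).toReal := sum_dist_le' x hfin hwmono hwmem n

private lemma elem_le_clip (x : ℝ → ℝ) {c τ A v : ℝ}
    (hb : ∀ s, τ ≤ s → s ≤ 1 → |x s| ≤ A) (hτ0 : 0 ≤ τ) (hτ1 : τ ≤ 1) (hc : 2*A ≤ c)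
    (hfin : eVariationOn x (Set.Icc 0 τ) ≠ ⊤)
    (hv : ∃ (n : ℕ) (u : Fin (n + 1) → ℝ), Monotone u ∧ u 0 = 0 ∧ u (Fin.last n) = 1 ∧
      v = ∑ i : Fin n, max (|x (u i.succ) - x (u i.castSucc)| - c) 0) :
    v ≤ (eVariationOn x (Set.Icc 0 τ)).toReal := by
  obtain ⟨n, u, hu, h0, hl, rfl⟩ := hv
  set w0 : ℕ → ℝ := fun i => u ⟨min i n, by omega⟩ with hw0
  have hu0 : ∀ i : Fin (n+1), (0:ℝ) ≤ u i := fun i => by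
    rw [← h0]; exact hu (Fin.zero_le _)
  have hu1 : ∀ i : Fin (n+1), u i ≤ 1 := fun i => by
    rw [← hl]; exact hu (Fin.le_last _)
  set w : ℕ → ℝ := fun i => min (w0 i) τ with hwdef
  have hw0mono : Monotone w0 := fun i j hij => hu (Fin.mk_le_mk.mpr (by omega))
  have hwmono : Monotone w := fun i j hij => min_le_min (hw0mono hij) le_rfl
  have hwmem : ∀ i, w i ∈ Set.Icc 0 τ := fun i => ⟨le_min (hu0 _) hτ0, min_le_right _ _⟩
  calc ∑ i : Fin n, max (|x (u i.succ) - x (u i.castSucc)| - c) 0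
      = ∑ i ∈ Finset.range n, max (|x (w0 (i+1)) - x (w0 i)| - c) 0 := by
        rw [fin_reindex u (fun p q => max (|x p - x q| - c) 0)]
    _ ≤ ∑ i ∈ Finset.range n, dist (x (w (i+1))) (x (w i)) := by
        refine Finset.sum_le_sum fun i _ => ?_
        exact clip_term_le x hb hτ1 hc (hw0mono (Nat.le_succ i)) (hu1 _)
    _ ≤ (eVariationOn x (Set.Icc 0 τ)).toReal := sum_dist_le' x hfin hwmono hwmem n

/-- With the normalization `φ(c) = 1/(1 + TV^c(x¹,[0,1]))` for the zigzag function
`x¹` (with `Σ aₙ = ∞`), `φ(c)·TV^c(x¹,[0,t]) → 0` for `t ∈ [0,1)` while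
`φ(c)·TV^c(x¹,[0,1]) → 1` as `c → 0+`. -/
theorem zigzag_normalized_limits (t : ℕ → ℝ) (hts : StrictMono t) (ht0 : t 0 = 0)
    (htlim : Tendsto t atTop (nhds 1))
    (a : ℕ → ℝ) (ha : Antitone a) (hapos : ∀ n, 0 < a n)
    (halim : Tendsto a atTop (nhds 0)) (hadiv : ¬ Summable a)
    (x : ℝ → ℝ)
    (hup : ∀ n : ℕ, ∀ s ∈ Set.Ico (t (2 * n)) (t (2 * n + 1)),
      x s = a n * (s - t (2 * n)) / (t (2 * n + 1) - t (2 * n)))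
    (hdown : ∀ n : ℕ, ∀ s ∈ Set.Ico (t (2 * n + 1)) (t (2 * n + 2)),
      x s = a n * (t (2 * n + 2) - s) / (t (2 * n + 2) - t (2 * n + 1)))
    (hx1 : x 1 = 0) :
    (∀ u ∈ Set.Ico (0 : ℝ) 1,
      Tendsto (fun c => (1 + truncVarR x c 0 1)⁻¹ * truncVarR x c 0 u)
        (nhdsWithin 0 (Set.Ioi 0)) (nhds 0)) ∧
      Tendsto (fun c => (1 + truncVarR x c 0 1)⁻¹ * truncVarR x c 0 1)
        (nhdsWithin 0 (Set.Ioi 0)) (nhds 1) := by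
  have tmono : Monotone t := hts.monotone
  have tle1 : ∀ n, t n ≤ 1 := tmono.ge_of_tendsto htlim
  have tnonneg : ∀ n, (0:ℝ) ≤ t n := fun n => ht0 ▸ tmono (Nat.zero_le n)
  -- values at grid points
  have xt_even : ∀ n, x (t (2*n)) = 0 := by
    intro n
    rw [hup n (t (2*n)) ⟨le_rfl, hts (by omega)⟩]
    simp
  have xt_odd : ∀ n, x (t (2*n+1)) = a n := by
    intro n
    rw [hdown n (t (2*n+1)) ⟨le_rfl, hts (by omega)⟩, mul_div_assoc,
      div_self (sub_pos.2 (hts (by omega))).ne', mul_one]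
  -- tail bound
  have hxabs : ∀ N : ℕ, ∀ s : ℝ, t (2*N) ≤ s → s ≤ 1 → |x s| ≤ a N := by
    intro N s hs hs1
    rcases eq_or_lt_of_le hs1 with h1 | h1
    · rw [h1, hx1]; simpa using (hapos N).le
    have hs0 : (0:ℝ) ≤ s := (tnonneg _).trans hs
    have hex : ∃ m, s < t m := ((tendsto_order.1 htlim).1 s h1).exists
    have hK : s < t (Nat.find hex) := Nat.find_spec hex
    have hK0 : Nat.find hex ≠ 0 := by
      intro h
      rw [h, ht0] at hK
      exact absurd hK (not_lt.2 hs0)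
    obtain ⟨k, hk⟩ : ∃ k, Nat.find hex = k + 1 :=
      ⟨Nat.find hex - 1, (Nat.succ_pred_eq_of_ne_zero hK0).symm⟩
    rw [hk] at hK
    have hks : t k ≤ s := not_lt.1 (Nat.find_min hex (by omega))
    have hkN : 2*N ≤ k := by
      have : t (2*N) < t (k+1) := lt_of_le_of_lt hs hK
      have := hts.lt_iff_lt.1 this
      omega
    rcases Nat.even_or_odd k with ⟨m, hm⟩ | ⟨m, hm⟩
    · have hm2 : k = 2*m := by omega
      subst hm2
      have hNm : N ≤ m := by omega
      have hd : (0:ℝ) < t (2*m+1) - t (2*m) := sub_pos.2 (hts (by omega))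
      rw [hup m s ⟨hks, hK⟩]
      have hnum0 : (0:ℝ) ≤ s - t (2*m) := sub_nonneg.2 hks
      have hxnn : (0:ℝ) ≤ a m * (s - t (2*m)) / (t (2*m+1) - t (2*m)) :=
        div_nonneg (mul_nonneg (hapos m).le hnum0) hd.le
      rw [abs_of_nonneg hxnn, div_le_iff₀ hd]
      calc a m * (s - t (2*m)) ≤ a m * (t (2*m+1) - t (2*m)) := by
            apply mul_le_mul_of_nonneg_left _ (hapos m).le
            linarith
        _ ≤ a N * (t (2*m+1) - t (2*m)) := by
            apply mul_le_mul_of_nonneg_right (ha hNm) hd.le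
    · have hm2 : k = 2*m+1 := by omega
      subst hm2
      have hNm : N ≤ m := by omega
      have hd : (0:ℝ) < t (2*m+2) - t (2*m+1) := sub_pos.2 (hts (by omega))
      rw [hdown m s ⟨hks, hK⟩]
      have hnum0 : (0:ℝ) ≤ t (2*m+2) - s := sub_nonneg.2 hK.le
      have hxnn : (0:ℝ) ≤ a m * (t (2*m+2) - s) / (t (2*m+2) - t (2*m+1)) :=
        div_nonneg (mul_nonneg (hapos m).le hnum0) hd.le
      rw [abs_of_nonneg hxnn, div_le_iff₀ hd]
      calc a m * (t (2*m+2) - s) ≤ a m * (t (2*m+2) - t (2*m+1)) := by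
            apply mul_le_mul_of_nonneg_left _ (hapos m).le
            linarith
        _ ≤ a N * (t (2*m+2) - t (2*m+1)) := by
            apply mul_le_mul_of_nonneg_right (ha hNm) hd.le
  -- finite variation on each piece
  have piece : ∀ k, eVariationOn x (Set.Icc (t k) (t (k+1))) ≠ ⊤ := by
    intro k
    rcases Nat.even_or_odd k with ⟨m, hm⟩ | ⟨m, hm⟩
    · have hm2 : k = 2*m := by omega
      subst hm2
      have hd : (0:ℝ) < t (2*m+1) - t (2*m) := sub_pos.2 (hts (by omega))
      set g : ℝ → ℝ := fun s => a m * (s - t (2*m)) / (t (2*m+1) - t (2*m)) with hg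
      have heq : Set.EqOn x g (Set.Icc (t (2*m)) (t (2*m+1))) := by
        intro s hs
        rcases lt_or_eq_of_le hs.2 with h | h
        · exact hup m s ⟨hs.1, h⟩
        · rw [h, xt_odd m, hg]
          simp only
          rw [mul_div_assoc, div_self hd.ne', mul_one]
      have hmono : Monotone g := by
        intro p q hpq
        simp only [hg]
        gcongr
        exact (hapos m).le
      rw [show (2*m+1) = 2*m+1 from rfl, eVariationOn.eq_of_eqOn heq]
      have h2 := hmono.monotoneOn (Set.Icc (t (2*m)) (t (2*m+1)))
      have h3 := h2.eVariationOn_le (Set.left_mem_Icc.2 (hts (by omega)).le)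
        (Set.right_mem_Icc.2 (hts (by omega)).le)
      rw [Set.inter_self] at h3
      exact ne_top_of_le_ne_top ENNReal.ofReal_ne_top h3
    · have hm2 : k = 2*m+1 := by omega
      subst hm2
      have hd : (0:ℝ) < t (2*m+2) - t (2*m+1) := sub_pos.2 (hts (by omega))
      set g : ℝ → ℝ := fun s => a m * (t (2*m+2) - s) / (t (2*m+2) - t (2*m+1)) with hg
      have heq : Set.EqOn x g (Set.Icc (t (2*m+1)) (t (2*m+2))) := by
        intro s hs
        rcases lt_or_eq_of_le hs.2 with h | h
        · exact hdown m s ⟨hs.1, h⟩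
        · rw [h]
          have := xt_even (m+1)
          rw [show 2*(m+1) = 2*m+2 by ring] at this
          rw [this, hg]
          simp
      have hmono : Monotone (fun s => -(g s)) := by
        intro p q hpq
        simp only [hg, neg_le_neg_iff]
        gcongr
        exact (hapos m).le
      rw [eVariationOn.eq_of_eqOn heq, ← evar_neg g]
      have h2 := hmono.monotoneOn (Set.Icc (t (2*m+1)) (t (2*m+2)))
      have h3 := h2.eVariationOn_le (Set.left_mem_Icc.2 (hts (by omega)).le)
        (Set.right_mem_Icc.2 (hts (by omega)).le)
      rw [Set.inter_self] at h3
      exact ne_top_of_le_ne_top ENNReal.ofReal_ne_top h3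
  have fin : ∀ M, eVariationOn x (Set.Icc 0 (t M)) ≠ ⊤ := by
    intro M
    induction M with
    | zero =>
      rw [ht0, Set.Icc_self, eVariationOn.subsingleton x Set.subsingleton_singleton]
      exact ENNReal.zero_ne_top
    | succ M ih =>
      have h := eVariationOn.Icc_add_Icc x (s := Set.univ) (a := 0) (b := t M)
        (c := t (M+1)) (tnonneg M) (hts (Nat.lt_succ_self M)).le (Set.mem_univ (t M))
      rw [Set.univ_inter, Set.univ_inter, Set.univ_inter] at h
      rw [← h]
      exact ENNReal.add_ne_top.2 ⟨ih, piece M⟩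
  -- nonnegativity of truncVarR
  have hnn : ∀ c s T : ℝ, 0 ≤ truncVarR x c s T := by
    intro c s T
    apply Real.sSup_nonneg
    rintro v ⟨n, u, _, _, _, rfl⟩
    exact Finset.sum_nonneg fun i _ => le_max_right _ _
  -- lower bound for truncVarR on [0,1]
  have lower : ∀ N : ℕ, ∀ c : ℝ, 0 < c →
      2 * (∑ k ∈ Finset.range N, a k) - 2*N*c ≤ truncVarR x c 0 1 := by
    intro N c hc
    -- bounded above
    obtain ⟨M, hM⟩ := (halim.eventually (gt_mem_nhds (half_pos hc))).exists
    have hbdd : BddAbove {v : ℝ | ∃ (n : ℕ) (u : Fin (n + 1) → ℝ), Monotone u ∧ u 0 = 0 ∧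
        u (Fin.last n) = 1 ∧
        v = ∑ i : Fin n, max (|x (u i.succ) - x (u i.castSucc)| - c) 0} := by
      refine ⟨(eVariationOn x (Set.Icc 0 (t (2*M)))).toReal, fun v hv => ?_⟩
      exact elem_le_clip x (hxabs M) (tnonneg _) (tle1 _) (by linarith) (fin (2*M)) hv
    set w : ℕ → ℝ := fun i => if i < 2*N+1 then t i else 1 with hwdef
    have hwm : ∀ i j, i ≤ j → w i ≤ w j := by
      intro i j hij
      simp only [hwdef]
      split_ifs with h1 h2 h2
      · exact tmono hij
      · exact tle1 _
      · omega
      · exact le_rfl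
    set u : Fin (2*N+1+1) → ℝ := fun i => w i.1 with hudef
    have humono : Monotone u := fun i j hij => hwm _ _ hij
    have hmem : (∑ i : Fin (2*N+1), max (|x (u i.succ) - x (u i.castSucc)| - c) 0) ∈
        {v : ℝ | ∃ (n : ℕ) (u : Fin (n + 1) → ℝ), Monotone u ∧ u 0 = 0 ∧
        u (Fin.last n) = 1 ∧
        v = ∑ i : Fin n, max (|x (u i.succ) - x (u i.castSucc)| - c) 0} := by
      refine ⟨2*N+1, u, humono, ?_, ?_, rfl⟩
      · simp only [hudef, hwdef, Fin.val_zero]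
        simp [ht0]
      · simp only [hudef, hwdef, Fin.val_last]
        rw [if_neg (by omega : ¬(2*N+1 < 2*N+1))]
    have hle : (∑ i : Fin (2*N+1), max (|x (u i.succ) - x (u i.castSucc)| - c) 0)
        ≤ truncVarR x c 0 1 := by
      unfold truncVarR
      exact le_csSup hbdd hmem
    refine le_trans ?_ hle
    -- rewrite sum as range sum
    have hrange : (∑ i : Fin (2*N+1), max (|x (u i.succ) - x (u i.castSucc)| - c) 0)
        = ∑ i ∈ Finset.range (2*N+1), max (|x (w (i+1)) - x (w i)| - c) 0 := by
      rw [fin_reindex u (fun p q => max (|x p - x q| - c) 0)]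
      refine Finset.sum_congr rfl fun i hi => ?_
      simp only [Finset.mem_range] at hi
      have e1 : min (i+1) (2*N+1) = i + 1 := by omega
      have e2 : min i (2*N+1) = i := by omega
      simp only [hudef, e1, e2]
    rw [hrange, Finset.sum_range_succ]
    have hg0 : ∀ i, (0:ℝ) ≤ max (|x (w (i+1)) - x (w i)| - c) 0 := fun i => le_max_right _ _
    have hmain : 2 * (∑ k ∈ Finset.range N, a k) - 2*N*c
        ≤ ∑ i ∈ Finset.range (2*N), max (|x (w (i+1)) - x (w i)| - c) 0 := by
      rw [sum_two_mul]
      have hterm : ∀ k ∈ Finset.range N,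
          (2 * a k - 2 * c) ≤ (max (|x (w (2*k+1)) - x (w (2*k))| - c) 0
            + max (|x (w (2*k+1+1)) - x (w (2*k+1))| - c) 0) := by
        intro k hk
        simp only [Finset.mem_range] at hk
        have e1 : w (2*k) = t (2*k) := by
          simp only [hwdef]; rw [if_pos (by omega)]
        have e2 : w (2*k+1) = t (2*k+1) := by
          simp only [hwdef]; rw [if_pos (by omega)]
        have e3 : w (2*k+1+1) = t (2*k+2) := by
          simp only [hwdef]
          rw [if_pos (by omega)]
        have hx2 : x (t (2*k+2)) = 0 := by
          have h := xt_even (k+1)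
          rwa [show 2*(k+1) = 2*k+2 by ring] at h
        rw [e1, e2, e3, xt_even, xt_odd, hx2]
        have hak : |a k - 0| = a k := by rw [sub_zero, abs_of_pos (hapos k)]
        have hak' : |(0:ℝ) - a k| = a k := by
          rw [zero_sub, abs_neg, abs_of_pos (hapos k)]
        rw [hak, hak']
        have := le_max_left (a k - c) (0:ℝ)
        linarith [le_max_left (a k - c) (0:ℝ)]
      calc 2 * (∑ k ∈ Finset.range N, a k) - 2*N*c
          = ∑ k ∈ Finset.range N, (2 * a k - 2 * c) := by
            rw [Finset.sum_sub_distrib, ← Finset.mul_sum, Finset.sum_const,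
              Finset.card_range, nsmul_eq_mul]
            ring
        _ ≤ _ := Finset.sum_le_sum hterm
    linarith [hg0 (2*N)]
  -- divergence of truncVarR x c 0 1
  have hVtop : Tendsto (fun c => truncVarR x c 0 1) (nhdsWithin 0 (Set.Ioi 0)) atTop := by
    rw [tendsto_atTop]
    intro M
    obtain ⟨N, hN⟩ := (((not_summable_iff_tendsto_nat_atTop_of_nonneg
      (fun i => (hapos i).le)).1 hadiv).eventually_ge_atTop ((M+1)/2)).exists
    have hmem : Set.Ioo (0:ℝ) (1/(2*N+1)) ∈ nhdsWithin 0 (Set.Ioi 0) :=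
      Ioo_mem_nhdsGT_of_mem ⟨le_rfl, by positivity⟩
    filter_upwards [hmem] with c hc
    have h1 := lower N c hc.1
    have h2 : 2*(N:ℝ)*c ≤ 1 := by
      have h3 := hc.2
      rw [lt_div_iff₀ (by positivity)] at h3
      nlinarith [hc.1.le]
    linarith
  -- second limit
  have hF : Tendsto (fun y : ℝ => (1+y)⁻¹ * y) atTop (nhds 1) := by
    have hinv : Tendsto (fun y : ℝ => (1+y)⁻¹) atTop (nhds 0) :=
      tendsto_inv_atTop_zero.comp (tendsto_atTop_add_const_left atTop 1 tendsto_id)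
    have h1 : Tendsto (fun y : ℝ => 1 - (1+y)⁻¹) atTop (nhds 1) := by
      simpa using tendsto_const_nhds.sub hinv
    apply h1.congr'
    filter_upwards [eventually_ge_atTop (0:ℝ)] with y hy
    have hne : (1:ℝ) + y ≠ 0 := by linarith
    field_simp
    ring
  constructor
  · intro u hu
    obtain ⟨M, hM⟩ : ∃ M, u < t M := ((tendsto_order.1 htlim).1 u hu.2).exists
    have hbound : ∀ c : ℝ, 0 < c →
        truncVarR x c 0 u ≤ (eVariationOn x (Set.Icc 0 (t M))).toReal := by
      intro c hc
      unfold truncVarR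
      apply Real.sSup_le _ ENNReal.toReal_nonneg
      intro v hv
      exact elem_le_gen x hc.le (Set.Icc_subset_Icc_right hM.le) (fin M) hv
    have hinv : Tendsto (fun c => (1 + truncVarR x c 0 1)⁻¹)
        (nhdsWithin 0 (Set.Ioi 0)) (nhds 0) :=
      tendsto_inv_atTop_zero.comp (tendsto_atTop_add_const_left _ 1 hVtop)
    have hpos : ∀ᶠ c in nhdsWithin (0:ℝ) (Set.Ioi 0), (0:ℝ) < c :=
      eventually_mem_nhdsWithin.mono (fun c hc => hc)
    apply squeeze_zero'
      (g := fun c => (1 + truncVarR x c 0 1)⁻¹ * (eVariationOn x (Set.Icc 0 (t M))).toReal)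
    · filter_upwards with c
      exact mul_nonneg (inv_nonneg.2 (by linarith [hnn c 0 1])) (hnn c 0 u)
    · filter_upwards [hpos] with c hc
      exact mul_le_mul_of_nonneg_left (hbound c hc) (inv_nonneg.2 (by linarith [hnn c 0 1]))
    · simpa using hinv.mul_const (eVariationOn x (Set.Icc 0 (t M))).toReal
  · exact hF.comp hVtop
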